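/- For fixed ξ₁ < ξ₂ and σ > 0, the function z ↦ E(h | z), the mean of the N(z, σ²) distribution truncated to [ξ₁, ξ₂], is strictly monotone increasing in z. -/

import Mathlib

open Real MeasureTheory

noncomputable def stdPhi (z : ℝ) : ℝ := (Real.sqrt (2 * Real.pi))⁻¹ * Real.exp (-z ^ 2 / 2)

lemma stdPhi_pos (z : ℝ) : 0 < stdPhi z := by
  unfold stdPhi
  positivity

lemma stdPhi_cont : Continuous stdPhi := by
  unfold stdPhi
  continuity

lemma stdPhi_integrable : Integrable stdPhi := by
  have h : Integrable (fun x : ℝ => Real.exp (-(1/2) * x ^ 2)) := integrable_exp_neg_mul_sq (by norm_num)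
  have := h.const_mul (Real.sqrt (2 * Real.pi))⁻¹
  convert this using 2 with x
  unfold stdPhi
  ring_nf

lemma stdPhi_hasDerivAt (x : ℝ) : HasDerivAt stdPhi (-x * stdPhi x) x := by
  unfold stdPhi
  have h : HasDerivAt (fun z : ℝ => -z ^ 2 / 2) (-x) x := by
    have := (hasDerivAt_pow 2 x).neg.div_const 2
    refine this.congr_deriv ?_; push_cast; ring
  have := (h.exp).const_mul (Real.sqrt (2 * Real.pi))⁻¹
  refine this.congr_deriv ?_; ring

noncomputable def stdCDF (z : ℝ) : ℝ := ∫ t in Set.Iic z, stdPhi t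

lemma stdCDF_sub (a b : ℝ) : stdCDF b - stdCDF a = ∫ t in a..b, stdPhi t := by
  exact (intervalIntegral.integral_Iic_sub_Iic stdPhi_integrable.integrableOn
    stdPhi_integrable.integrableOn)

lemma stdCDF_hasDerivAt (x : ℝ) : HasDerivAt stdCDF (stdPhi x) x := by
  have h : HasDerivAt (fun z => ∫ t in (0:ℝ)..z, stdPhi t) (stdPhi x) x := by
    refine intervalIntegral.integral_hasDerivAt_right
      (stdPhi_integrable.intervalIntegrable)
      (stdPhi_cont.aestronglyMeasurable.stronglyMeasurableAtFilter)
      stdPhi_cont.continuousAt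
  have heq : ∀ z, stdCDF z = stdCDF 0 + ∫ t in (0:ℝ)..z, stdPhi t := by
    intro z; rw [← stdCDF_sub]; ring
  have := (h.const_add (stdCDF 0))
  exact this.congr_of_eventuallyEq (Filter.Eventually.of_forall fun z => heq z)

lemma contA : Continuous fun t : ℝ => t * stdPhi t := continuous_id.mul stdPhi_cont
lemma contB : Continuous fun t : ℝ => t ^ 2 * stdPhi t := (continuous_pow 2).mul stdPhi_cont
lemma contC (c : ℝ) : Continuous fun t : ℝ => (t - c) ^ 2 * stdPhi t :=
  (((continuous_id.sub continuous_const).pow 2)).mul stdPhi_cont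

lemma integral_id_mul_stdPhi (a b : ℝ) :
    ∫ t in a..b, t * stdPhi t = stdPhi a - stdPhi b := by
  have h : ∀ x ∈ Set.uIcc a b, HasDerivAt (fun t => -stdPhi t) (x * stdPhi x) x := by
    intro x _
    have := (stdPhi_hasDerivAt x).neg
    refine this.congr_deriv ?_; ring
  have := intervalIntegral.integral_eq_sub_of_hasDerivAt h
    (contA.intervalIntegrable a b)
  rw [this]; ring

lemma integral_sq_mul_stdPhi (a b : ℝ) :
    ∫ t in a..b, t ^ 2 * stdPhi t =
      (∫ t in a..b, stdPhi t) + a * stdPhi a - b * stdPhi b := by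
  have h : ∀ x ∈ Set.uIcc a b, HasDerivAt (fun t => -(t * stdPhi t))
      (x ^ 2 * stdPhi x - stdPhi x) x := by
    intro x _
    have := ((hasDerivAt_id x).mul (stdPhi_hasDerivAt x)).neg
    refine this.congr_deriv ?_; simp [id]; ring
  have hint : IntervalIntegrable (fun x => x ^ 2 * stdPhi x - stdPhi x) volume a b :=
    (contB.sub stdPhi_cont).intervalIntegrable a b
  have := intervalIntegral.integral_eq_sub_of_hasDerivAt h hint
  rw [intervalIntegral.integral_sub (contB.intervalIntegrable a b)
    (stdPhi_cont.intervalIntegrable a b)] at this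
  linarith [this]

lemma D_pos {a b : ℝ} (hab : a < b) : 0 < ∫ t in a..b, stdPhi t :=
  intervalIntegral.intervalIntegral_pos_of_pos_on (stdPhi_cont.intervalIntegrable a b)
    (fun x _ => stdPhi_pos x) hab

lemma sq_integral_pos {a b c : ℝ} (hab : a < b) :
    0 < ∫ t in a..b, (t - c) ^ 2 * stdPhi t := by
  rw [intervalIntegral.integral_pos_iff_support_of_nonneg_ae
    (Filter.Eventually.of_forall fun t => mul_nonneg (sq_nonneg _) (stdPhi_pos t).le)
    ((contC c).intervalIntegrable a b)]
  refine ⟨hab, ?_⟩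
  have hsub : Set.Ioc a b \ {c} ⊆ Function.support (fun t => (t - c) ^ 2 * stdPhi t) ∩ Set.Ioc a b := by
    rintro t ⟨ht, htc⟩
    refine ⟨?_, ht⟩
    have h0 : t - c ≠ 0 := sub_ne_zero.2 htc
    simp only [Function.mem_support]
    exact ne_of_gt (mul_pos (by positivity) (stdPhi_pos t))
  calc (0:ENNReal) < volume (Set.Ioc a b \ {c}) := by
        rw [measure_diff_null (by simp)]
        simp [hab]
    _ ≤ _ := measure_mono hsub

lemma key_ineq {a b : ℝ} (hab : a < b) :
    (stdPhi a - stdPhi b) ^ 2 <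
      (∫ t in a..b, stdPhi t) * ((∫ t in a..b, stdPhi t) + a * stdPhi a - b * stdPhi b) := by
  set D := ∫ t in a..b, stdPhi t with hD
  have hDpos : 0 < D := D_pos hab
  set c := (stdPhi a - stdPhi b) / D with hc
  have hexp : ∫ t in a..b, (t - c) ^ 2 * stdPhi t =
      (∫ t in a..b, t ^ 2 * stdPhi t) - 2 * c * (∫ t in a..b, t * stdPhi t) + c ^ 2 * D := by
    have h1 : ∀ t, (t - c) ^ 2 * stdPhi t =
        t ^ 2 * stdPhi t - 2 * c * (t * stdPhi t) + c ^ 2 * stdPhi t := by intro t; ring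
    simp_rw [h1]
    rw [intervalIntegral.integral_add, intervalIntegral.integral_sub,
      intervalIntegral.integral_const_mul, intervalIntegral.integral_const_mul]
    · exact contB.intervalIntegrable a b
    · exact (((continuous_const.mul contA))).intervalIntegrable a b
    · exact (contB.sub
        (continuous_const.mul contA)).intervalIntegrable a b
    · exact (continuous_const.mul stdPhi_cont).intervalIntegrable a b
  have hpos := sq_integral_pos (c := c) hab
  rw [hexp, integral_id_mul_stdPhi, integral_sq_mul_stdPhi] at hpos
  have hc2 : c * D = stdPhi a - stdPhi b := div_mul_cancel₀ _ hDpos.ne'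
  nlinarith [hpos, hDpos, sq_nonneg c]

theorem truncated_gaussian_mean_strict_mono (ξ₁ ξ₂ σ : ℝ) (hξ : ξ₁ < ξ₂) (hσ : 0 < σ) :
    StrictMono (fun z : ℝ =>
      z + σ * (stdPhi ((ξ₁ - z) / σ) - stdPhi ((ξ₂ - z) / σ)) /
        (stdCDF ((ξ₂ - z) / σ) - stdCDF ((ξ₁ - z) / σ))) := by
  refine strictMono_of_deriv_pos fun z => ?_
  set a : ℝ := (ξ₁ - z) / σ with ha
  set b : ℝ := (ξ₂ - z) / σ with hb
  have hab : a < b := by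
    rw [ha, hb]; exact (div_lt_div_iff_of_pos_right hσ).2 (by linarith)
  have hDeq : stdCDF b - stdCDF a = ∫ t in a..b, stdPhi t := stdCDF_sub a b
  have hDpos : 0 < stdCDF b - stdCDF a := by rw [hDeq]; exact D_pos hab
  set D : ℝ := stdCDF b - stdCDF a with hD
  have h1 : HasDerivAt (fun z : ℝ => (ξ₁ - z) / σ) (-1 / σ) z := by
    have := ((hasDerivAt_const z ξ₁).sub (hasDerivAt_id z)).div_const σ
    simpa using this
  have h2 : HasDerivAt (fun z : ℝ => (ξ₂ - z) / σ) (-1 / σ) z := by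
    have := ((hasDerivAt_const z ξ₂).sub (hasDerivAt_id z)).div_const σ
    simpa using this
  have hφa : HasDerivAt (fun z : ℝ => stdPhi ((ξ₁ - z) / σ)) (-a * stdPhi a * (-1 / σ)) z :=
    HasDerivAt.comp (h₂ := stdPhi) z (stdPhi_hasDerivAt a) h1
  have hφb : HasDerivAt (fun z : ℝ => stdPhi ((ξ₂ - z) / σ)) (-b * stdPhi b * (-1 / σ)) z :=
    HasDerivAt.comp (h₂ := stdPhi) z (stdPhi_hasDerivAt b) h2
  have hΦa : HasDerivAt (fun z : ℝ => stdCDF ((ξ₁ - z) / σ)) (stdPhi a * (-1 / σ)) z :=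
    HasDerivAt.comp (h₂ := stdCDF) z (stdCDF_hasDerivAt a) h1
  have hΦb : HasDerivAt (fun z : ℝ => stdCDF ((ξ₂ - z) / σ)) (stdPhi b * (-1 / σ)) z :=
    HasDerivAt.comp (h₂ := stdCDF) z (stdCDF_hasDerivAt b) h2
  have hnum : HasDerivAt (fun z : ℝ => σ * (stdPhi ((ξ₁ - z) / σ) - stdPhi ((ξ₂ - z) / σ)))
      (σ * (-a * stdPhi a * (-1 / σ) - -b * stdPhi b * (-1 / σ))) z :=
    (hφa.sub hφb).const_mul σ
  have hden : HasDerivAt (fun z : ℝ => stdCDF ((ξ₂ - z) / σ) - stdCDF ((ξ₁ - z) / σ))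
      (stdPhi b * (-1 / σ) - stdPhi a * (-1 / σ)) z := hΦb.sub hΦa
  have hF : HasDerivAt (fun z : ℝ =>
      z + σ * (stdPhi ((ξ₁ - z) / σ) - stdPhi ((ξ₂ - z) / σ)) /
        (stdCDF ((ξ₂ - z) / σ) - stdCDF ((ξ₁ - z) / σ)))
      (1 + (σ * (-a * stdPhi a * (-1 / σ) - -b * stdPhi b * (-1 / σ)) * D -
        σ * (stdPhi a - stdPhi b) * (stdPhi b * (-1 / σ) - stdPhi a * (-1 / σ))) / D ^ 2) z :=
    (hasDerivAt_id z).add (hnum.div hden hDpos.ne')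
  rw [hF.deriv]
  have hval : 1 + (σ * (-a * stdPhi a * (-1 / σ) - -b * stdPhi b * (-1 / σ)) * D -
      σ * (stdPhi a - stdPhi b) * (stdPhi b * (-1 / σ) - stdPhi a * (-1 / σ))) / D ^ 2 =
      (D ^ 2 + (a * stdPhi a - b * stdPhi b) * D - (stdPhi a - stdPhi b) ^ 2) / D ^ 2 := by
    field_simp
    ring
  rw [hval]
  have hkey : (stdPhi a - stdPhi b) ^ 2 < D * (D + a * stdPhi a - b * stdPhi b) := by
    rw [hDeq]; exact key_ineq hab
  exact div_pos (by nlinarith) (by positivity)
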